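/- For every T ≥ 1, the periodic Gaussian φ_p is monotonically increasing on the interval [−π, 0] and monotonically decreasing on the interval [0, π]. -/

import Mathlib

open Real Set

noncomputable section

/-- The (unnormalized) `2π`-periodization of the Gaussian `x ↦ exp(-x²T²/2)`. -/
def periodicGaussSum (T x : ℝ) : ℝ :=
  ∑' j : ℤ, Real.exp (-((x + 2 * π * j) ^ 2 * T ^ 2) / 2)

/-- The normalizing constant `W = (Σ_{j∈ℤ} exp(-2π²j²T²))⁻¹`, so that `φ_p(0) = 1`. -/
def Wconst (T : ℝ) : ℝ := (∑' j : ℤ, Real.exp (-(2 * π ^ 2 * j ^ 2 * T ^ 2)))⁻¹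

/-- The periodic Gaussian `φ_p(x) = W·Σ_{j∈ℤ} exp(-(x+2πj)²T²/2)`. -/
def phip (T x : ℝ) : ℝ := Wconst T * periodicGaussSum T x

namespace PGaux

/-- `u e^{-u²T²/2}` is antitone on `[1, ∞)` when `T ≥ 1`. -/
lemma gg_anti {T : ℝ} (hT : 1 ≤ T) {u v : ℝ} (hu : 1 ≤ u) (huv : u ≤ v) :
    v * Real.exp (-(v ^ 2 * T ^ 2) / 2) ≤ u * Real.exp (-(u ^ 2 * T ^ 2) / 2) := by
  have hT0 : (1 : ℝ) ≤ T ^ 2 := by nlinarith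
  have ha : (2 : ℝ) ≤ v + u := by linarith
  have hb : (1 : ℝ) ≤ T ^ 2 * u := by nlinarith [mul_nonneg (sub_nonneg.2 hT0) (sub_nonneg.2 hu)]
  have hc : (2 : ℝ) * 1 ≤ (v + u) * (T ^ 2 * u) := by
    apply mul_le_mul ha hb one_pos.le (by linarith)
  have h1 : (v ^ 2 - u ^ 2) * T ^ 2 / 2 + 1 ≤ Real.exp ((v ^ 2 - u ^ 2) * T ^ 2 / 2) :=
    Real.add_one_le_exp _
  have key : v ≤ u * Real.exp ((v ^ 2 - u ^ 2) * T ^ 2 / 2) := by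
    have h2 : u * ((v ^ 2 - u ^ 2) * T ^ 2 / 2 + 1) ≤
        u * Real.exp ((v ^ 2 - u ^ 2) * T ^ 2 / 2) :=
      mul_le_mul_of_nonneg_left h1 (by linarith)
    nlinarith [mul_nonneg (sub_nonneg.2 huv) (sub_nonneg.2 hc)]
  calc v * Real.exp (-(v ^ 2 * T ^ 2) / 2)
      ≤ (u * Real.exp ((v ^ 2 - u ^ 2) * T ^ 2 / 2)) * Real.exp (-(v ^ 2 * T ^ 2) / 2) :=
        mul_le_mul_of_nonneg_right key (Real.exp_pos _).le
    _ = u * Real.exp (-(u ^ 2 * T ^ 2) / 2) := by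
        rw [mul_assoc, ← Real.exp_add]
        congr 2
        ring


lemma sq_lower {x m : ℝ} (hx0 : 0 ≤ x) (hx1 : x ≤ 1) (hm : 1 ≤ m) :
    1 + 25 * m ^ 2 ≤ (2 * π * m - x) ^ 2 := by
  have hπ : (3.141592 : ℝ) < π := Real.pi_gt_d6
  have hπ' : π < 3.15 := Real.pi_lt_d2
  have h4pi : (39.47 : ℝ) ≤ 4 * π ^ 2 := by nlinarith
  have h4pi' : 4 * π ≤ 12.6 := by nlinarith
  have hπm0 : (0:ℝ) ≤ π * m := mul_nonneg Real.pi_pos.le (by linarith)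
  have hπm : 0 ≤ 4 * (π * m) * (1 - x) := by
    apply mul_nonneg (by linarith) (by linarith)
  have h39 : 39.47 * m ^ 2 ≤ 4 * π ^ 2 * m ^ 2 :=
    mul_le_mul_of_nonneg_right h4pi (sq_nonneg m)
  have h126 : 4 * π * m ≤ 12.6 * m :=
    mul_le_mul_of_nonneg_right h4pi' (by linarith)
  nlinarith [sq_nonneg x, sq_nonneg (m - 1)]


lemma decay_bound {T2 m : ℝ} (hT2 : 1 ≤ T2) (hm : 1 ≤ m) :
    m ^ 2 * T2 * Real.exp (-(25 * m ^ 2 * T2 / 2)) ≤ (1 / 2) * Real.exp (-(10 * m)) := by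
  set s := m ^ 2 * T2 / 2 with hs
  have hmsq : m ^ 2 * 1 ≤ m ^ 2 * T2 := mul_le_mul_of_nonneg_left hT2 (sq_nonneg m)
  have hs_half : m ^ 2 / 2 ≤ s := by rw [hs]; linarith
  have hm0 : (0:ℝ) ≤ m := by linarith
  have hs_nonneg : 0 ≤ s := by rw [hs]; positivity
  have h4s : 4 * s * Real.exp (-(4 * s)) ≤ 1 := by
    have h1 : 4 * s ≤ Real.exp (4 * s) := by
      have := Real.add_one_le_exp (4 * s); linarith
    have h2 := mul_le_mul_of_nonneg_right h1 (Real.exp_pos (-(4 * s))).le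
    rwa [← Real.exp_add, show 4 * s + -(4 * s) = 0 by ring, Real.exp_zero] at h2
  have hsplit : Real.exp (-(25 * m ^ 2 * T2 / 2)) =
      Real.exp (-(4 * s)) * Real.exp (-(21 * s)) := by
    rw [← Real.exp_add]; congr 1; rw [hs]; ring
  have h21 : Real.exp (-(21 * s)) ≤ Real.exp (-(10 * m)) := by
    apply Real.exp_le_exp.2
    have h1 : 21 * (m ^ 2 / 2) ≤ 21 * s := by linarith
    nlinarith [mul_nonneg (sub_nonneg.2 hm) (sub_nonneg.2 hm)]
  calc m ^ 2 * T2 * Real.exp (-(25 * m ^ 2 * T2 / 2))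
      = 2 * s * (Real.exp (-(4 * s)) * Real.exp (-(21 * s))) := by rw [hsplit, hs]; ring
    _ ≤ 2 * s * (Real.exp (-(4 * s)) * Real.exp (-(10 * m))) := by
        apply mul_le_mul_of_nonneg_left (mul_le_mul_of_nonneg_left h21 (Real.exp_pos _).le)
        linarith
    _ = (1 / 2) * (4 * s * Real.exp (-(4 * s))) * Real.exp (-(10 * m)) := by ring
    _ ≤ (1 / 2) * 1 * Real.exp (-(10 * m)) := by
        apply mul_le_mul_of_nonneg_right _ (Real.exp_pos _).le
        nlinarith
    _ = (1 / 2) * Real.exp (-(10 * m)) := by ring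

/-- Quantitative bound on the deficit `g(2πm-x) - g(2πm+x)` for `0 < x ≤ 1`, `m ≥ 1`. -/
lemma pair_bound {T : ℝ} (hT : 1 ≤ T) {x m : ℝ} (hx0 : 0 ≤ x) (hx1 : x ≤ 1) (hm : 1 ≤ m) :
    (2 * π * m - x) * Real.exp (-((2 * π * m - x) ^ 2 * T ^ 2) / 2)
      - (2 * π * m + x) * Real.exp (-((2 * π * m + x) ^ 2 * T ^ 2) / 2)
    ≤ 4 * π ^ 2 * x * Real.exp (-T ^ 2 / 2) * Real.exp (-(10 * m)) := by
  have hπ : (3.141592 : ℝ) < π := Real.pi_gt_d6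
  have hπ' : π < 3.15 := Real.pi_lt_d2
  have hT2 : (1 : ℝ) ≤ T ^ 2 := by nlinarith
  set A := 2 * π * m with hA
  have hA6 : 6 * m ≤ A := by nlinarith
  have hAx : 5 ≤ A - x := by nlinarith
  set p := (A - x) ^ 2 * T ^ 2 / 2 with hp
  set q := (A + x) ^ 2 * T ^ 2 / 2 with hq
  have hpq : p ≤ q := by
    rw [hp, hq]
    have : (A - x) ^ 2 ≤ (A + x) ^ 2 := by nlinarith
    nlinarith
  have hd : q - p = 2 * A * x * T ^ 2 := by rw [hp, hq]; ring
  -- e^{-p} - e^{-q} ≤ (q-p) e^{-p}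
  have hstep1 : Real.exp (-p) - Real.exp (-q) ≤ (q - p) * Real.exp (-p) := by
    have hEq : Real.exp (-q) = Real.exp (-p) * Real.exp (-(q - p)) := by
      rw [← Real.exp_add]; congr 1; ring
    have h1 : 1 - (q - p) ≤ Real.exp (-(q - p)) := by
      have := Real.add_one_le_exp (-(q - p)); linarith
    have := mul_le_mul_of_nonneg_left h1 (Real.exp_pos (-p)).le
    rw [hEq]; nlinarith [Real.exp_pos (-p)]
  -- main term bound
  have hstep2 : (A - x) * Real.exp (-p) - (A + x) * Real.exp (-q)
      ≤ 8 * π ^ 2 * m ^ 2 * x * T ^ 2 * Real.exp (-p) := by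
    have hEq_nonneg : (0:ℝ) ≤ Real.exp (-q) := (Real.exp_pos _).le
    have hdiff_nonneg : 0 ≤ Real.exp (-p) - Real.exp (-q) :=
      sub_nonneg.2 (Real.exp_le_exp.2 (by linarith))
    have h2 : (A - x) * (Real.exp (-p) - Real.exp (-q)) ≤ A * ((q - p) * Real.exp (-p)) := by
      apply mul_le_mul (by linarith) hstep1 hdiff_nonneg (by nlinarith)
    have hArw : A * ((q - p) * Real.exp (-p)) = 8 * π ^ 2 * m ^ 2 * x * T ^ 2 * Real.exp (-p) := by
      rw [hd, hA]; ring
    nlinarith [mul_nonneg (mul_nonneg hx0 hEq_nonneg) (by norm_num : (0:ℝ) ≤ 2)]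
  -- e^{-p} ≤ e^{-T²/2} e^{-25 m² T²/2}
  have hsq : 1 + 25 * m ^ 2 ≤ (A - x) ^ 2 := by
    rw [hA]; exact sq_lower hx0 hx1 hm
  have hstep3 : Real.exp (-p) ≤ Real.exp (-T ^ 2 / 2) * Real.exp (-(25 * m ^ 2 * T ^ 2 / 2)) := by
    rw [← Real.exp_add]
    apply Real.exp_le_exp.2
    rw [hp]
    have := mul_le_mul_of_nonneg_right hsq (by positivity : (0:ℝ) ≤ T ^ 2 / 2)
    nlinarith
  have hstep4 := decay_bound hT2 hm
  -- combine
  calc (2 * π * m - x) * Real.exp (-((2 * π * m - x) ^ 2 * T ^ 2) / 2)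
      - (2 * π * m + x) * Real.exp (-((2 * π * m + x) ^ 2 * T ^ 2) / 2)
      = (A - x) * Real.exp (-p) - (A + x) * Real.exp (-q) := by
        rw [hp, hq, hA]; ring_nf
    _ ≤ 8 * π ^ 2 * m ^ 2 * x * T ^ 2 * Real.exp (-p) := hstep2
    _ ≤ 8 * π ^ 2 * m ^ 2 * x * T ^ 2 *
          (Real.exp (-T ^ 2 / 2) * Real.exp (-(25 * m ^ 2 * T ^ 2 / 2))) := by
        apply mul_le_mul_of_nonneg_left hstep3
        positivity
    _ = 8 * π ^ 2 * x * Real.exp (-T ^ 2 / 2) *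
          (m ^ 2 * T ^ 2 * Real.exp (-(25 * m ^ 2 * T ^ 2 / 2))) := by ring
    _ ≤ 8 * π ^ 2 * x * Real.exp (-T ^ 2 / 2) * ((1 / 2) * Real.exp (-(10 * m))) := by
        apply mul_le_mul_of_nonneg_left hstep4
        positivity
    _ = 4 * π ^ 2 * x * Real.exp (-T ^ 2 / 2) * Real.exp (-(10 * m)) := by ring

lemma sum_exp_abs : Summable (fun j : ℤ => Real.exp (-|(j : ℝ)|)) := by
  have hnat : Summable (fun n : ℕ => Real.exp (-(n : ℝ))) := by
    refine Summable.congr (summable_geometric_of_lt_one (Real.exp_pos (-1:ℝ)).le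
      (Real.exp_lt_one_iff.2 (by norm_num))) fun n => ?_
    rw [← Real.exp_nat_mul]
    congr 1
    ring
  have hshift : Summable (fun n : ℕ => Real.exp (-((n : ℝ) + 1))) := by
    refine ((summable_nat_add_iff 1).2 hnat).congr fun n => ?_
    congr 1
    push_cast
    ring
  apply Summable.of_nat_of_neg_add_one
  · refine hnat.congr fun n => ?_
    congr 1
    rw [Int.cast_natCast, abs_of_nonneg (Nat.cast_nonneg n)]
  · refine hshift.congr fun n => ?_
    congr 1
    have h1 : ((-((n:ℤ) + 1) : ℤ) : ℝ) = -((n : ℝ) + 1) := by push_cast; ring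
    rw [h1, abs_neg, abs_of_nonneg (by positivity)]

lemma abs_facts {x : ℝ} (hx : |x| ≤ 4) {j : ℤ} (hj : j ≠ 0) :
    1 ≤ |(j : ℝ)| ∧ 2 * |(j : ℝ)| ≤ |x + 2 * π * j| ∧ |x + 2 * π * j| ≤ 11 * |(j : ℝ)| := by
  have hπ : (3.141592 : ℝ) < π := Real.pi_gt_d6
  have hπ' : π < 3.15 := Real.pi_lt_d2
  have hn : (1 : ℝ) ≤ |(j : ℝ)| := by exact_mod_cast Int.one_le_abs hj
  have h1 : |2 * π * (j : ℝ)| = 2 * π * |(j : ℝ)| := by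
    rw [abs_mul, abs_of_nonneg (by positivity : (0:ℝ) ≤ 2 * π)]
  refine ⟨hn, ?_, ?_⟩
  · have h2 : |2 * π * (j : ℝ)| - |-x| ≤ |2 * π * (j : ℝ) - -x| := abs_sub_abs_le_abs_sub _ _
    rw [show 2 * π * (j : ℝ) - -x = x + 2 * π * j by ring, abs_neg] at h2
    have h3 : (2 * π - 2) * 1 ≤ (2 * π - 2) * |(j : ℝ)| :=
      mul_le_mul_of_nonneg_left hn (by nlinarith)
    nlinarith [h2, h1]
  · have h2 : |x + 2 * π * (j : ℝ)| ≤ |x| + |2 * π * (j : ℝ)| := abs_add_le _ _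
    have h3 : (4 : ℝ) * 1 ≤ 4 * |(j : ℝ)| := mul_le_mul_of_nonneg_left hn (by norm_num)
    nlinarith [h2, h1]

lemma F_le {T : ℝ} (hT : 1 ≤ T) {x : ℝ} (hx : |x| ≤ 4) (j : ℤ) :
    Real.exp (-((x + 2 * π * j) ^ 2 * T ^ 2) / 2) ≤ Real.exp (-|(j : ℝ)|) := by
  have hT2 : (1 : ℝ) ≤ T ^ 2 := by nlinarith
  apply Real.exp_le_exp.2
  rcases eq_or_ne j 0 with rfl | hj
  · simp only [Int.cast_zero, mul_zero, add_zero, abs_zero, neg_zero]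
    nlinarith [mul_nonneg (sq_nonneg x) (sq_nonneg T)]
  · obtain ⟨hn, hlow, -⟩ := abs_facts hx hj
    have hsq : (2 * |(j : ℝ)|) ^ 2 ≤ (x + 2 * π * j) ^ 2 := by
      rw [← sq_abs (x + 2 * π * (j:ℝ))]
      apply pow_le_pow_left₀ (by positivity) hlow
    have h2 : 4 * |(j : ℝ)| ^ 2 * 1 ≤ (x + 2 * π * j) ^ 2 * T ^ 2 :=
      mul_le_mul (by nlinarith) hT2 zero_le_one (by positivity)
    nlinarith [mul_le_mul_of_nonneg_left hn (by positivity : (0:ℝ) ≤ 2 * |(j:ℝ)|)]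

lemma term_bound {T : ℝ} (hT : 1 ≤ T) {x : ℝ} (hx : |x| ≤ 4) (j : ℤ) :
    |x + 2 * π * j| * Real.exp (-((x + 2 * π * j) ^ 2 * T ^ 2) / 2)
      ≤ 11 * Real.exp (-|(j : ℝ)|) := by
  have hT2 : (1 : ℝ) ≤ T ^ 2 := by nlinarith
  rcases eq_or_ne j 0 with rfl | hj
  · simp only [Int.cast_zero, mul_zero, add_zero, abs_zero, neg_zero, Real.exp_zero, mul_one]
    have h1 : Real.exp (-(x ^ 2 * T ^ 2) / 2) ≤ 1 := by
      rw [Real.exp_le_one_iff]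
      nlinarith [mul_nonneg (sq_nonneg x) (sq_nonneg T)]
    calc |x| * Real.exp (-(x ^ 2 * T ^ 2) / 2) ≤ 4 * 1 :=
          mul_le_mul hx h1 (Real.exp_pos _).le (by norm_num)
      _ ≤ 11 := by norm_num
  · obtain ⟨hn, hlow, hhigh⟩ := abs_facts hx hj
    set n := |(j : ℝ)| with hdefn
    have hn0 : 0 ≤ n := by linarith
    have hsq : (2 * n) ^ 2 ≤ (x + 2 * π * j) ^ 2 := by
      rw [← sq_abs (x + 2 * π * (j:ℝ))]
      apply pow_le_pow_left₀ (by positivity) hlow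
    have hexp : Real.exp (-((x + 2 * π * j) ^ 2 * T ^ 2) / 2) ≤ Real.exp (-(2 * n ^ 2)) := by
      apply Real.exp_le_exp.2
      have h2 : 4 * n ^ 2 * 1 ≤ (x + 2 * π * j) ^ 2 * T ^ 2 :=
        mul_le_mul (by nlinarith) hT2 zero_le_one (by positivity)
      nlinarith
    have hkey : n * Real.exp (-(2 * n ^ 2)) ≤ Real.exp (-n) := by
      have h3 : n ≤ Real.exp n := by have := Real.add_one_le_exp n; linarith
      calc n * Real.exp (-(2 * n ^ 2)) ≤ Real.exp n * Real.exp (-(2 * n ^ 2)) :=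
            mul_le_mul_of_nonneg_right h3 (Real.exp_pos _).le
        _ = Real.exp (n + -(2 * n ^ 2)) := by rw [← Real.exp_add]
        _ ≤ Real.exp (-n) := by
            apply Real.exp_le_exp.2
            nlinarith [mul_le_mul_of_nonneg_left hn (by linarith : (0:ℝ) ≤ 2 * n)]
    calc |x + 2 * π * j| * Real.exp (-((x + 2 * π * j) ^ 2 * T ^ 2) / 2)
        ≤ (11 * n) * Real.exp (-(2 * n ^ 2)) :=
          mul_le_mul hhigh hexp (Real.exp_pos _).le (by positivity)
      _ = 11 * (n * Real.exp (-(2 * n ^ 2))) := by ring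
      _ ≤ 11 * Real.exp (-n) := by
          apply mul_le_mul_of_nonneg_left hkey (by norm_num)

set_option maxHeartbeats 1000000 in
lemma sign_lemma {T : ℝ} (hT : 1 ≤ T) {x : ℝ} (hx : x ∈ Ioo 0 π) :
    0 ≤ ∑' j : ℤ, (x + 2 * π * j) * Real.exp (-((x + 2 * π * j) ^ 2 * T ^ 2) / 2) := by
  have hπ' : π < 3.15 := Real.pi_lt_d2
  obtain ⟨hx0, hxπ⟩ := hx
  have hx4 : |x| ≤ 4 := by rw [abs_le]; constructor <;> nlinarith
  set f : ℤ → ℝ := fun j => (x + 2 * π * j) * Real.exp (-((x + 2 * π * j) ^ 2 * T ^ 2) / 2)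
    with hf
  have hnorm : ∀ j : ℤ, ‖f j‖ ≤ 11 * Real.exp (-|(j : ℝ)|) := by
    intro j
    rw [hf]
    simp only [Real.norm_eq_abs, abs_mul, abs_of_pos (Real.exp_pos _)]
    exact term_bound hT hx4 j
  have hsum : Summable f :=
    Summable.of_norm_bounded (sum_exp_abs.mul_left 11) hnorm
  have hpos : Summable fun n : ℕ => f (n : ℤ) :=
    hsum.comp_injective (fun a b h => by exact_mod_cast h)
  have hneg : Summable fun n : ℕ => f (-((n : ℤ) + 1)) :=
    hsum.comp_injective (fun a b h => by omega)
  have split : (∑' j : ℤ, f j) = (∑' n : ℕ, f (n : ℤ)) + ∑' n : ℕ, f (-((n : ℤ) + 1)) :=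
    tsum_of_nat_of_neg_add_one hpos hneg
  rw [split]
  rcases le_or_gt 1 x with hx1 | hx1
  · -- case 1 ≤ x : pair n with -(n+1)
    have e4 : (∑' n : ℕ, (f (n : ℤ) + f (-((n : ℤ) + 1)))) =
        (∑' n : ℕ, f (n : ℤ)) + ∑' n : ℕ, f (-((n : ℤ) + 1)) := Summable.tsum_add hpos hneg
    have hnn : 0 ≤ ∑' n : ℕ, (f (n : ℤ) + f (-((n : ℤ) + 1))) := by
      apply tsum_nonneg
      intro n
      have hn0 : (0 : ℝ) ≤ (n : ℝ) := Nat.cast_nonneg n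
      have hu : (1 : ℝ) ≤ x + 2 * π * (n : ℝ) := by nlinarith [Real.pi_pos]
      have huv : x + 2 * π * (n : ℝ) ≤ 2 * π * ((n : ℝ) + 1) - x := by nlinarith
      have key := gg_anti hT hu huv
      have e1 : f (n : ℤ) =
          (x + 2 * π * (n : ℝ)) * Real.exp (-((x + 2 * π * (n : ℝ)) ^ 2 * T ^ 2) / 2) := by
        rw [hf]
        norm_num
      have e2 : f (-((n : ℤ) + 1)) = -((2 * π * ((n : ℝ) + 1) - x) *
          Real.exp (-((2 * π * ((n : ℝ) + 1) - x) ^ 2 * T ^ 2) / 2)) := by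
        rw [hf]
        have h1 : x + 2 * π * ((-((n : ℤ) + 1) : ℤ) : ℝ) = -(2 * π * ((n : ℝ) + 1) - x) := by
          push_cast; ring
        simp only [h1, neg_sq, neg_mul]
      rw [e1, e2]
      linarith [key]
    linarith [e4, hnn]
  · -- case 0 < x < 1
    have hx1' : x ≤ 1 := hx1.le
    have hpos' : Summable fun n : ℕ => f (((n + 1 : ℕ) : ℤ)) := (summable_nat_add_iff 1).2 hpos
    have e0 : (∑' n : ℕ, f (n : ℤ)) = f ((0 : ℕ) : ℤ) + ∑' n : ℕ, f (((n + 1 : ℕ) : ℤ)) :=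
      Summable.tsum_eq_zero_add hpos
    have hneg' : Summable fun n : ℕ => f (-((n : ℤ) + 1)) := hneg
    have e3 : (∑' n : ℕ, (f (((n + 1 : ℕ) : ℤ)) + f (-((n : ℤ) + 1)))) =
        (∑' n : ℕ, f (((n + 1 : ℕ) : ℤ))) + ∑' n : ℕ, f (-((n : ℤ) + 1)) :=
      Summable.tsum_add hpos' hneg'
    set C := 4 * π ^ 2 * x * Real.exp (-T ^ 2 / 2) with hC
    have hC0 : 0 ≤ C := by rw [hC]; positivity
    have hβs : Summable fun n : ℕ => C * Real.exp (-(10 * ((n : ℝ) + 1))) := by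
      apply Summable.mul_left
      have hg : Summable (fun n : ℕ => Real.exp (-10 : ℝ) ^ (n + 1)) :=
        (summable_nat_add_iff 1).2 (summable_geometric_of_lt_one (Real.exp_pos _).le
          (Real.exp_lt_one_iff.2 (by norm_num)))
      refine hg.congr fun n => ?_
      rw [← Real.exp_nat_mul]
      congr 1
      push_cast
      ring
    have hterm : ∀ n : ℕ, -(C * Real.exp (-(10 * ((n : ℝ) + 1)))) ≤
        f (((n + 1 : ℕ) : ℤ)) + f (-((n : ℤ) + 1)) := by
      intro n
      have hn0 : (0 : ℝ) ≤ (n : ℝ) := Nat.cast_nonneg n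
      have hm1 : (1 : ℝ) ≤ (n : ℝ) + 1 := by linarith
      have e1 : f (((n + 1 : ℕ) : ℤ)) = (2 * π * ((n : ℝ) + 1) + x) *
          Real.exp (-((2 * π * ((n : ℝ) + 1) + x) ^ 2 * T ^ 2) / 2) := by
        rw [hf]
        have h1 : x + 2 * π * (((n + 1 : ℕ) : ℤ) : ℝ) = 2 * π * ((n : ℝ) + 1) + x := by
          push_cast; ring
        simp only [h1]
      have e2 : f (-((n : ℤ) + 1)) = -((2 * π * ((n : ℝ) + 1) - x) *
          Real.exp (-((2 * π * ((n : ℝ) + 1) - x) ^ 2 * T ^ 2) / 2)) := by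
        rw [hf]
        have h1 : x + 2 * π * ((-((n : ℤ) + 1) : ℤ) : ℝ) = -(2 * π * ((n : ℝ) + 1) - x) := by
          push_cast; ring
        simp only [h1, neg_sq, neg_mul]
      have hpb := pair_bound hT hx0.le hx1' hm1
      rw [e1, e2, hC]
      linarith [hpb]
    have hge : -(∑' n : ℕ, C * Real.exp (-(10 * ((n : ℝ) + 1)))) ≤
        ∑' n : ℕ, (f (((n + 1 : ℕ) : ℤ)) + f (-((n : ℤ) + 1))) := by
      rw [← tsum_neg]
      exact Summable.tsum_le_tsum hterm hβs.neg (hpos'.add hneg')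
    -- numeric bound on the geometric sum
    have h2e : (2 : ℝ) ≤ Real.exp 1 := by have := Real.add_one_le_exp 1; linarith
    have h1024 : (1024 : ℝ) ≤ Real.exp 10 := by
      calc (1024 : ℝ) = 2 ^ 10 := by norm_num
        _ ≤ Real.exp 1 ^ 10 := pow_le_pow_left₀ (by norm_num) h2e 10
        _ = Real.exp 10 := by rw [← Real.exp_nat_mul]; norm_num
    have hrval : Real.exp (-10 : ℝ) ≤ 1 / 1024 := by
      rw [Real.exp_neg]
      calc (Real.exp 10)⁻¹ ≤ (1024 : ℝ)⁻¹ :=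
            inv_anti₀ (by norm_num) h1024
        _ = 1 / 1024 := by norm_num
    have hrpos : (0 : ℝ) < Real.exp (-10 : ℝ) := Real.exp_pos _
    have hinv : (1 - Real.exp (-10 : ℝ))⁻¹ ≤ 2 := by
      have h1 : (1 / 2 : ℝ) ≤ 1 - Real.exp (-10 : ℝ) := by linarith
      have h2 := inv_anti₀ (by norm_num : (0:ℝ) < 1/2) h1
      norm_num at h2
      linarith
    have hβval : (∑' n : ℕ, C * Real.exp (-(10 * ((n : ℝ) + 1)))) ≤ f ((0 : ℕ) : ℤ) := by
      have hr : ∀ n : ℕ, Real.exp (-(10 * ((n : ℝ) + 1))) =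
          Real.exp (-10 : ℝ) * Real.exp (-10 : ℝ) ^ n := by
        intro n
        rw [← Real.exp_nat_mul, ← Real.exp_add]
        congr 1
        push_cast
        ring
      have hval : (∑' n : ℕ, C * Real.exp (-(10 * ((n : ℝ) + 1)))) =
          C * Real.exp (-10 : ℝ) * (1 - Real.exp (-10 : ℝ))⁻¹ := by
        calc (∑' n : ℕ, C * Real.exp (-(10 * ((n : ℝ) + 1))))
            = ∑' n : ℕ, (C * Real.exp (-10 : ℝ)) * Real.exp (-10 : ℝ) ^ n :=
              tsum_congr fun n => by rw [hr n]; ring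
          _ = (C * Real.exp (-10 : ℝ)) * ∑' n : ℕ, Real.exp (-10 : ℝ) ^ n := tsum_mul_left
          _ = C * Real.exp (-10 : ℝ) * (1 - Real.exp (-10 : ℝ))⁻¹ := by
              rw [tsum_geometric_of_lt_one hrpos.le (Real.exp_lt_one_iff.2 (by norm_num))]
      have hf0 : f ((0 : ℕ) : ℤ) = x * Real.exp (-(x ^ 2 * T ^ 2) / 2) := by
        rw [hf]
        norm_num
      have hx2 : x ^ 2 ≤ 1 := by nlinarith
      have hx2T : x ^ 2 * T ^ 2 ≤ 1 * T ^ 2 := mul_le_mul_of_nonneg_right hx2 (sq_nonneg T)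
      have hf0ge : x * Real.exp (-T ^ 2 / 2) ≤ f ((0 : ℕ) : ℤ) := by
        rw [hf0]
        apply mul_le_mul_of_nonneg_left _ hx0.le
        apply Real.exp_le_exp.2
        linarith
      have hrr : Real.exp (-10 : ℝ) * (1 - Real.exp (-10 : ℝ))⁻¹ ≤ 1 / 512 := by
        have hinv0 : (0 : ℝ) ≤ (1 - Real.exp (-10 : ℝ))⁻¹ := by
          apply inv_nonneg.2; linarith
        calc Real.exp (-10 : ℝ) * (1 - Real.exp (-10 : ℝ))⁻¹ ≤ (1 / 1024) * 2 :=
              mul_le_mul hrval hinv hinv0 (by norm_num)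
          _ = 1 / 512 := by norm_num
      have hpi2 : 4 * π ^ 2 ≤ 40 := by nlinarith
      have hxE : (0 : ℝ) ≤ x * Real.exp (-T ^ 2 / 2) :=
        mul_nonneg hx0.le (Real.exp_pos _).le
      calc (∑' n : ℕ, C * Real.exp (-(10 * ((n : ℝ) + 1))))
          = C * (Real.exp (-10 : ℝ) * (1 - Real.exp (-10 : ℝ))⁻¹) := by rw [hval]; ring
        _ ≤ C * (1 / 512) := mul_le_mul_of_nonneg_left hrr hC0
        _ ≤ x * Real.exp (-T ^ 2 / 2) := by
            rw [hC]
            linarith [mul_le_mul_of_nonneg_right hpi2 hxE, hxE]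
        _ ≤ f ((0 : ℕ) : ℤ) := hf0ge
    linarith [e0, e3, hge, hβval]

lemma hasDerivAt_pgs {T : ℝ} (hT : 1 ≤ T) {y : ℝ} (hy : y ∈ Ioo (-4 : ℝ) 4) :
    HasDerivAt (periodicGaussSum T)
      (∑' j : ℤ, -T ^ 2 * ((y + 2 * π * j) *
        Real.exp (-((y + 2 * π * j) ^ 2 * T ^ 2) / 2))) y := by
  have h0 : (0 : ℝ) ∈ Ioo (-4 : ℝ) 4 := by constructor <;> norm_num
  have hu : Summable (fun j : ℤ => 11 * T ^ 2 * Real.exp (-|(j : ℝ)|)) :=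
    sum_exp_abs.mul_left _
  have hg : ∀ (j : ℤ) (z : ℝ), z ∈ Ioo (-4 : ℝ) 4 →
      HasDerivAt (fun w : ℝ => Real.exp (-((w + 2 * π * j) ^ 2 * T ^ 2) / 2))
        (-T ^ 2 * ((z + 2 * π * j) * Real.exp (-((z + 2 * π * j) ^ 2 * T ^ 2) / 2))) z := by
    intro j z _
    have h2 : HasDerivAt (fun w : ℝ => w + 2 * π * (j : ℝ)) 1 z := (hasDerivAt_id z).add_const _
    have h3 := ((h2.pow 2).mul_const (T ^ 2)).neg.div_const 2
    have h4 := h3.exp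
    convert h4 using 1
    show _ = Real.exp (-((z + 2 * π * j) ^ 2 * T ^ 2) / 2) *
      (-(((2:ℕ):ℝ) * (z + 2 * π * j) ^ 1 * 1 * T ^ 2) / 2)
    push_cast
    ring
    rfl
  have hg' : ∀ (j : ℤ) (z : ℝ), z ∈ Ioo (-4 : ℝ) 4 →
      ‖-T ^ 2 * ((z + 2 * π * j) * Real.exp (-((z + 2 * π * j) ^ 2 * T ^ 2) / 2))‖ ≤
        11 * T ^ 2 * Real.exp (-|(j : ℝ)|) := by
    intro j z hz
    have hz4 : |z| ≤ 4 := by rw [abs_le]; exact ⟨hz.1.le, hz.2.le⟩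
    rw [Real.norm_eq_abs, abs_mul, abs_mul, abs_neg, abs_of_nonneg (sq_nonneg T),
      abs_of_pos (Real.exp_pos _)]
    calc T ^ 2 * (|z + 2 * π * j| * Real.exp (-((z + 2 * π * j) ^ 2 * T ^ 2) / 2))
        ≤ T ^ 2 * (11 * Real.exp (-|(j : ℝ)|)) :=
          mul_le_mul_of_nonneg_left (term_bound hT hz4 j) (sq_nonneg T)
      _ = 11 * T ^ 2 * Real.exp (-|(j : ℝ)|) := by ring
  have hg0 : Summable (fun j : ℤ => Real.exp (-((0 + 2 * π * j) ^ 2 * T ^ 2) / 2)) := by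
    apply Summable.of_nonneg_of_le (fun j => (Real.exp_pos _).le)
      (fun j => F_le hT (by norm_num : |(0 : ℝ)| ≤ 4) j) sum_exp_abs
  exact hasDerivAt_tsum_of_isPreconnected hu isOpen_Ioo (convex_Ioo _ _).isPreconnected
    hg hg' h0 hg0 hy

lemma pgs_even (T x : ℝ) : periodicGaussSum T (-x) = periodicGaussSum T x := by
  unfold periodicGaussSum
  rw [← (Equiv.neg ℤ).tsum_eq (fun j : ℤ => Real.exp (-((-x + 2 * π * j) ^ 2 * T ^ 2) / 2))]
  apply tsum_congr
  intro j
  simp only [Equiv.neg_apply]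
  congr 1
  push_cast
  ring

lemma pgs_anti {T : ℝ} (hT : 1 ≤ T) : AntitoneOn (periodicGaussSum T) (Icc 0 π) := by
  have hπ4 : π < 4 := lt_trans Real.pi_lt_d2 (by norm_num)
  have hsub : Icc (0 : ℝ) π ⊆ Ioo (-4 : ℝ) 4 := fun z hz =>
    ⟨by linarith [hz.1], by linarith [hz.2]⟩
  apply antitoneOn_of_deriv_nonpos (convex_Icc _ _)
  · intro z hz
    exact (hasDerivAt_pgs hT (hsub hz)).continuousAt.continuousWithinAt
  · rw [interior_Icc]
    intro z hz
    exact (hasDerivAt_pgs hT (hsub (Ioo_subset_Icc_self hz))).differentiableAt.differentiableWithinAt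
  · rw [interior_Icc]
    intro z hz
    rw [(hasDerivAt_pgs hT (hsub (Ioo_subset_Icc_self hz))).deriv, tsum_mul_left]
    apply mul_nonpos_of_nonpos_of_nonneg
    · nlinarith [sq_nonneg T]
    · exact sign_lemma hT hz

end PGaux

theorem periodicGaussian_monotone (T : ℝ) (hT : 1 ≤ T) :
    MonotoneOn (phip T) (Icc (-π) 0) ∧ AntitoneOn (phip T) (Icc 0 π) := by
  have hW : 0 ≤ Wconst T := by
    unfold Wconst
    apply inv_nonneg.2
    apply tsum_nonneg
    intro j
    exact (Real.exp_pos _).le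
  have hanti := PGaux.pgs_anti hT
  constructor
  · intro u hu v hv huv
    have hmu : -u ∈ Icc 0 π := ⟨by linarith [hu.2], by linarith [hu.1]⟩
    have hmv : -v ∈ Icc 0 π := ⟨by linarith [hv.2], by linarith [hv.1]⟩
    have h := hanti hmv hmu (by linarith : -v ≤ -u)
    unfold phip
    apply mul_le_mul_of_nonneg_left _ hW
    rw [← PGaux.pgs_even T u, ← PGaux.pgs_even T v]
    exact h
  · intro u hu v hv huv
    unfold phip
    exact mul_le_mul_of_nonneg_left (hanti hu hv huv) hW

end
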